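/- Let g be an n-dimensional real solvable Lie algebra with inner product ⟨·,·⟩ and an orthonormal basis {e₁,…,e_n} adapted to a chain of ideals g_{n−i} = span{e₁,…,e_i} with each g_r an ideal of codimension 1 in g_{r−1}. With structure constants c_{ij}^k = ⟨[e_i,e_j], e_k⟩, the inner product is cyclic if and only if c_{ik}^j = c_{jk}^i for all 1 ≤ i < j < k ≤ n. -/

import Mathlib

/-- For a solvable metric Lie algebra with an adapted orthonormal basis
(so that `c_{ij}^k = 0` whenever `k ≥ max{i,j}`), the inner product is cyclic iff
`c_{ik}^j = c_{jk}^i` for all `i < j < k`. -/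
theorem solvable_cyclic_iff_structure_constants {L : Type*} [LieRing L] [LieAlgebra ℝ L]
    [LieAlgebra.IsSolvable L] {n : ℕ}
    (ip : L →ₗ[ℝ] L →ₗ[ℝ] ℝ)
    (hsymm : ∀ x y : L, ip x y = ip y x)
    (hpos : ∀ x : L, x ≠ 0 → 0 < ip x x)
    (e : Module.Basis (Fin n) ℝ L)
    (horth : ∀ i j, ip (e i) (e j) = if i = j then 1 else 0)
    (c : Fin n → Fin n → Fin n → ℝ)
    (hc : ∀ i j k, c i j k = ip ⁅e i, e j⁆ (e k))
    (hadapted : ∀ i j k : Fin n, max i j ≤ k → c i j k = 0) :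
    (∀ X Y Z : L, ip ⁅X, Y⁆ Z + ip ⁅Y, Z⁆ X + ip ⁅Z, X⁆ Y = 0) ↔
      (∀ i j k : Fin n, i < j → j < k → c i k j = c j k i) := by
  have hanti : ∀ i j k : Fin n, c i j k = - c j i k := by
    intro i j k
    rw [hc, hc, ← lie_skew (e i) (e j), map_neg, LinearMap.neg_apply]
  constructor
  · intro hcyc i j k hij hjk
    have h := hcyc (e i) (e k) (e j)
    rw [← hc, ← hc, ← hc] at h
    have h1 : c j i k = 0 := by
      rw [hanti]
      rw [hadapted i j k (max_le (hij.trans hjk).le hjk.le)]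
      ring
    have h2 : c k j i = - c j k i := by rw [hanti]
    rw [h1, h2] at h
    linarith
  · intro H X Y Z
    have key : ∀ i j k : Fin n, c i j k + c k i j + c j k i = 0 := by
      intro i j k
      rcases eq_or_ne i j with hij | hij
      · subst hij
        have h0 : c i i k = 0 := by
          rw [hc, lie_self]; simp
        have := hanti i k i
        linarith
      rcases eq_or_ne j k with hjk | hjk
      · subst hjk
        have h0 : c j j i = 0 := by
          rw [hc, lie_self]; simp
        have := hanti i j j
        linarith
      rcases eq_or_ne i k with hik | hik
      · subst hik
        have h0 : c i i j = 0 := by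
          rw [hc, lie_self]; simp
        have := hanti i j i
        linarith
      -- all distinct
      rcases lt_trichotomy i j with h1 | h1 | h1
      · rcases lt_trichotomy j k with h2 | h2 | h2
        · -- i < j < k
          have hz : c i j k = 0 := hadapted i j k (max_le (h1.trans h2).le h2.le)
          have hH := H i j k h1 h2
          have := hanti k i j
          have := hanti i k j
          linarith
        · exact absurd h2 hjk
        · rcases lt_trichotomy i k with h3 | h3 | h3
          · -- i < k < j
            have hz : c k i j = 0 := hadapted k i j (max_le h2.le h1.le)
            have hH := H i k j h3 h2
            have := hanti j k i
            linarith
          · exact absurd h3 hik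
          · -- k < i < j
            have hz : c k i j = 0 := hadapted k i j (max_le (h3.trans h1).le h1.le)
            have hH := H k i j h3 h1
            have := hanti i j k
            have := hanti j k i
            linarith
      · exact absurd h1 hij
      · rcases lt_trichotomy i k with h2 | h2 | h2
        · -- j < i < k
          have hz : c i j k = 0 := hadapted i j k (max_le h2.le (h1.trans h2).le)
          have hH := H j i k h1 h2
          have := hanti k i j
          linarith
        · exact absurd h2 hik
        · rcases lt_trichotomy j k with h3 | h3 | h3
          · -- j < k < i
            have hz : c j k i = 0 := hadapted j k i (max_le (h3.trans h2).le h2.le)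
            have hH := H j k i h3 h2
            have := hanti i j k
            linarith
          · exact absurd h3 hjk
          · -- k < j < i
            have hz : c j k i = 0 := hadapted j k i (max_le h1.le (h3.trans h1).le)
            have hH := H k j i h3 h1
            have := hanti i j k
            have := hanti k i j
            linarith
    -- build the trilinear map and extend by linearity
    let B : L →ₗ[ℝ] L →ₗ[ℝ] L :=
      LinearMap.mk₂ ℝ (fun x y : L => ⁅x, y⁆) add_lie smul_lie lie_add lie_smul
    let T : L →ₗ[ℝ] L →ₗ[ℝ] L →ₗ[ℝ] ℝ := B.compr₂ ip
    let P : (L →ₗ[ℝ] L →ₗ[ℝ] L →ₗ[ℝ] ℝ) → (L →ₗ[ℝ] L →ₗ[ℝ] L →ₗ[ℝ] ℝ) :=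
      fun S => LinearMap.lflip.toLinearMap ∘ₗ S.flip
    have hP : ∀ (S : L →ₗ[ℝ] L →ₗ[ℝ] L →ₗ[ℝ] ℝ) (x y z : L), P S x y z = S z x y := by
      intro S x y z
      simp [P]
    have hT : ∀ x y z : L, T x y z = ip ⁅x, y⁆ z := by
      intro x y z
      simp [T, B]
    have hF : T + P T + P (P T) = 0 := by
      refine e.ext fun i => ?_
      refine e.ext fun j => ?_
      refine e.ext fun k => ?_
      simp only [LinearMap.add_apply, LinearMap.zero_apply]
      rw [hP, hP, hP, hT, hT, hT, ← hc, ← hc, ← hc]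
      have := key i j k
      linarith
    have := LinearMap.ext_iff.mp (LinearMap.ext_iff.mp (LinearMap.ext_iff.mp hF X) Y) Z
    simp only [LinearMap.add_apply, LinearMap.zero_apply] at this
    rw [hP, hP, hP, hT, hT, hT] at this
    linarith
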